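/- Let R and S be rings and let F be an equivalence from the category of right R-modules to the category of right S-modules. If M is a non-singular right R-module, then F(M) is a non-singular right S-module. -/

import Mathlib

open MulOpposite

section Defs

variable (R : Type*) [Ring R]

/-- The right annihilator of an element of a right `R`-module (a module over `Rᵐᵒᵖ`),
as a right ideal of `R`. -/
def RightAnn (M : Type*) [AddCommGroup M] [Module Rᵐᵒᵖ M] (x : M) : Submodule Rᵐᵒᵖ R where
  carrier := {r : R | op r • x = 0}
  zero_mem' := by simp
  add_mem' := by
    intro a b ha hb
    simp only [Set.mem_setOf_eq] at *
    rw [op_add, add_smul, ha, hb, add_zero]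
  smul_mem' := by
    intro c a ha
    simp only [Set.mem_setOf_eq] at *
    have h1 : c • a = a * unop c := rfl
    rw [h1, op_mul, op_unop, mul_smul, ha, smul_zero]

/-- The right annihilator of a subset of `R`, as a set. -/
def rightAnnSet (A : Set R) : Set R := {r : R | ∀ a ∈ A, a * r = 0}

/-- The left annihilator of a subset of `R`, as a set. -/
def leftAnnSet (A : Set R) : Set R := {r : R | ∀ a ∈ A, r * a = 0}

/-- A submodule is essential if it intersects every nonzero submodule nontrivially. -/
def IsEssentialSubmodule {A : Type*} [Ring A] {M : Type*} [AddCommGroup M] [Module A M]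
    (U : Submodule A M) : Prop :=
  ∀ V : Submodule A M, U ⊓ V = ⊥ → V = ⊥

/-- A right `R`-module is non-singular if its singular submodule is zero, i.e. no
nonzero element has essential right annihilator. -/
def IsNonsingularMod (M : Type*) [AddCommGroup M] [Module Rᵐᵒᵖ M] : Prop :=
  ∀ x : M, IsEssentialSubmodule (RightAnn R M x) → x = 0

/-- A right `R`-module is singular if every element has essential right annihilator. -/
def IsSingularMod (M : Type*) [AddCommGroup M] [Module Rᵐᵒᵖ M] : Prop :=
  ∀ x : M, IsEssentialSubmodule (RightAnn R M x)

/-- Hattori torsion-freeness for right `R`-modules. -/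
def HattoriTorsionFree (M : Type*) [AddCommGroup M] [Module Rᵐᵒᵖ M] : Prop :=
  ∀ (x : M) (r : R), op r • x = 0 →
    ∃ (k : ℕ) (xs : Fin k → M) (rs : Fin k → R),
      x = ∑ i, op (rs i) • xs i ∧ ∀ i, rs i * r = 0

/-- A ring is torsion-free if every finitely generated right ideal is a torsion-free
right `R`-module. -/
def IsTorsionFreeRing : Prop :=
  ∀ I : Submodule Rᵐᵒᵖ R, I.FG → HattoriTorsionFree R I

/-- A ring is a right p.p.-ring if every principal right ideal is projective. -/
def IsRightPPRing : Prop :=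
  ∀ x : R, Module.Projective Rᵐᵒᵖ (Submodule.span Rᵐᵒᵖ ({x} : Set R))

/-- A ring is a left p.p.-ring if every principal left ideal is projective. -/
def IsLeftPPRing : Prop :=
  ∀ x : R, Module.Projective R (Submodule.span R ({x} : Set R))

/-- A ring is right semi-hereditary if every finitely generated right ideal is projective. -/
def IsRightSemihereditary : Prop :=
  ∀ I : Submodule Rᵐᵒᵖ R, I.FG → Module.Projective Rᵐᵒᵖ I

/-- `R` contains no infinite set of (nonzero, pairwise) orthogonal idempotents. -/
def NoInfiniteOrthogonalIdempotents : Prop :=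
  ∀ S : Set R, (∀ e ∈ S, e * e = e ∧ e ≠ 0) →
    (∀ e ∈ S, ∀ f ∈ S, e ≠ f → e * f = 0 ∧ f * e = 0) → S.Finite

/-- A ring is Baer if the right annihilator of every subset is generated, as a right
ideal, by an idempotent. -/
def IsBaerRing : Prop :=
  ∀ A : Set R, ∃ e : R, e * e = e ∧ rightAnnSet R A = {y : R | ∃ r : R, y = e * r}

/-- A ring is right Utumi if it is right non-singular and every S-closed right ideal
is a right annihilator. -/
def IsRightUtumi : Prop :=
  IsNonsingularMod R R ∧
    ∀ I : Submodule Rᵐᵒᵖ R, IsNonsingularMod R (R ⧸ I) →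
      ∃ A : Set R, (I : Set R) = rightAnnSet R A

/-- The left annihilator of an element of a left `R`-module, as a left ideal of `R`. -/
def LeftAnn (M : Type*) [AddCommGroup M] [Module R M] (x : M) : Submodule R R :=
  LinearMap.ker (LinearMap.toSpanSingleton R M x)

/-- A left `R`-module is non-singular if no nonzero element has essential left annihilator. -/
def IsLeftNonsingularMod (M : Type*) [AddCommGroup M] [Module R M] : Prop :=
  ∀ x : M, IsEssentialSubmodule (LeftAnn R M x) → x = 0

/-- A ring is left Utumi if it is left non-singular and every S-closed left ideal is a
left annihilator. -/
def IsLeftUtumi : Prop :=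
  IsLeftNonsingularMod R R ∧
    ∀ I : Submodule R R, IsLeftNonsingularMod R (R ⧸ I) →
      ∃ A : Set R, (I : Set R) = leftAnnSet R A

end Defs

section AuxMorita

open CategoryTheory Limits

universe u

lemma comap_essential {A : Type*} [Ring A] {M N : Type*} [AddCommGroup M]
    [AddCommGroup N] [Module A M] [Module A N] (f : M →ₗ[A] N) {U : Submodule A N}
    (hU : IsEssentialSubmodule U) : IsEssentialSubmodule (U.comap f) := by
  intro V hV
  have hmap : U ⊓ Submodule.map f V = ⊥ := by
    rw [Submodule.eq_bot_iff]
    intro y hy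
    obtain ⟨hyU, hymap⟩ := Submodule.mem_inf.mp hy
    obtain ⟨v, hv, rfl⟩ := Submodule.mem_map.mp hymap
    have hvmem : v ∈ U.comap f ⊓ V := Submodule.mem_inf.mpr ⟨Submodule.mem_comap.mpr hyU, hv⟩
    rw [hV] at hvmem
    rw [Submodule.mem_bot] at hvmem
    rw [hvmem, map_zero]
  have hmap' := hU _ hmap
  rw [Submodule.eq_bot_iff] at hmap' ⊢
  intro v hv
  have hfv : f v = 0 := hmap' _ (Submodule.mem_map.mpr ⟨v, hv, rfl⟩)
  have hvmem : v ∈ U.comap f ⊓ V :=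
    Submodule.mem_inf.mpr ⟨Submodule.mem_comap.mpr (by rw [hfv]; exact Submodule.zero_mem U), hv⟩
  rw [hV] at hvmem
  exact Submodule.mem_bot _ |>.mp hvmem

lemma ess_ker_iff {A : Type u} [Ring A] {X Y : ModuleCat.{u} A} (f : X ⟶ Y) :
    IsEssentialSubmodule (LinearMap.ker (f.hom : X →ₗ[A] Y)) ↔
      ∀ (C : ModuleCat.{u} A) (g : C ⟶ X), Mono (g ≫ f) → IsZero C := by
  constructor
  · intro hf C g hg
    rw [ModuleCat.mono_iff_injective] at hg
    have hrange : LinearMap.ker (f.hom : X →ₗ[A] Y) ⊓ LinearMap.range (g.hom : C →ₗ[A] X) = ⊥ := by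
      rw [Submodule.eq_bot_iff]
      intro x hx
      obtain ⟨hxk, hxr⟩ := Submodule.mem_inf.mp hx
      obtain ⟨c, rfl⟩ := LinearMap.mem_range.mp hxr
      have : (g ≫ f) c = (g ≫ f) 0 := by
        show f (g c) = f (g 0)
        rw [LinearMap.mem_ker] at hxk
        rw [hxk, map_zero, map_zero]
      rw [hg this, map_zero]
    have hr0 := hf _ hrange
    have hsub : Subsingleton C := by
      constructor
      intro a b
      apply hg
      show f (g a) = f (g b)
      have ha : g a = 0 := by
        have : g a ∈ LinearMap.range (g.hom : C →ₗ[A] X) := ⟨a, rfl⟩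
        rw [hr0] at this; exact Submodule.mem_bot _ |>.mp this
      have hb : g b = 0 := by
        have : g b ∈ LinearMap.range (g.hom : C →ₗ[A] X) := ⟨b, rfl⟩
        rw [hr0] at this; exact Submodule.mem_bot _ |>.mp this
      rw [ha, hb]
    exact @ModuleCat.isZero_of_subsingleton A _ C hsub
  · intro hchar V hV
    let g : ModuleCat.of A V ⟶ X := ModuleCat.ofHom V.subtype
    have hmono : Mono (g ≫ f) := by
      rw [ModuleCat.mono_iff_injective]
      intro a b hab
      apply Subtype.ext
      have h1 : f (V.subtype a) = f (V.subtype b) := hab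
      have h2 : (V.subtype a - V.subtype b) ∈ LinearMap.ker (f.hom : X →ₗ[A] Y) ⊓ V := by
        refine Submodule.mem_inf.mpr ⟨LinearMap.mem_ker.mpr (by rw [map_sub, h1, sub_self]), ?_⟩
        exact Submodule.sub_mem V a.2 b.2
      rw [hV, Submodule.mem_bot] at h2
      exact sub_eq_zero.mp h2
    have hz := hchar _ g hmono
    have : (𝟙 (ModuleCat.of A V) : ModuleCat.of A V ⟶ ModuleCat.of A V) = 0 := hz.eq_of_src _ _
    rw [Submodule.eq_bot_iff]
    intro v hv
    have h1 : (⟨v, hv⟩ : V) = (𝟙 (ModuleCat.of A V) : ModuleCat.of A V ⟶ ModuleCat.of A V) ⟨v, hv⟩ := rfl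
    rw [this] at h1
    have : (⟨v, hv⟩ : V) = (0 : V) := h1
    exact congrArg Subtype.val this

lemma char_transport {A B : Type u} [Ring A] [Ring B]
    (E : ModuleCat.{u} A ≌ ModuleCat.{u} B) {X Y : ModuleCat.{u} A} (f : X ⟶ Y)
    (hf : ∀ (C : ModuleCat.{u} A) (g : C ⟶ X), Mono (g ≫ f) → IsZero C)
    (C : ModuleCat.{u} B) (g : C ⟶ E.functor.obj X) (hg : Mono (g ≫ E.functor.map f)) :
    IsZero C := by
  haveI := hg
  have key : (E.inverse.map g ≫ E.unitInv.app X) ≫ f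
      = E.inverse.map (g ≫ E.functor.map f) ≫ E.unitInv.app Y := by
    simp only [Functor.map_comp, Category.assoc]
    erw [NatTrans.naturality (E.unitInv) f]
    rfl
  haveI : Functor.PreservesMonomorphisms E.inverse :=
    CategoryTheory.Functor.preservesMonomorphisms_of_adjunction E.toAdjunction
  haveI hm1 : Mono (E.inverse.map (g ≫ E.functor.map f)) := E.inverse.map_mono _
  haveI hi1 : IsIso (E.unitInv.app X) := inferInstanceAs (IsIso ((E.unitIso.app X).symm.hom))
  haveI hi2 : IsIso (E.unitInv.app Y) := inferInstanceAs (IsIso ((E.unitIso.app Y).symm.hom))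
  have h2 : Mono ((E.inverse.map g ≫ E.unitInv.app X) ≫ f) := by
    rw [key]; exact @mono_comp _ _ _ _ _ (E.inverse.map (g ≫ E.functor.map f)) hm1 (E.unitInv.app Y) (IsIso.mono_of_iso _)
  have hz : IsZero (E.inverse.obj C) := hf _ (E.inverse.map g ≫ E.unitInv.app X) h2
  exact (E.functor.map_isZero hz).of_iso (E.counitIso.app C).symm

end AuxMorita

open CategoryTheory

/-- If `F` is an equivalence from right `R`-modules to right `S`-modules and `M` is a
non-singular right `R`-module, then `F(M)` is a non-singular right `S`-module. -/
theorem stmt_17 (R : Type u) (S : Type u) [Ring R] [Ring S]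
    (F : ModuleCat.{u} Rᵐᵒᵖ ⥤ ModuleCat.{u} Sᵐᵒᵖ) [F.IsEquivalence]
    (M : ModuleCat.{u} Rᵐᵒᵖ) (hM : IsNonsingularMod R M) :
    IsNonsingularMod S (F.obj M) := by
  intro y hy
  let E := F.asEquivalence.symm
  let hlin : S →ₗ[Sᵐᵒᵖ] (F.obj M) :=
    { toFun := fun s => op s • y
      map_add' := fun s t => by
        show op (s + t) • y = op s • y + op t • y
        rw [MulOpposite.op_add, add_smul]
      map_smul' := fun c s => by
        show op (s * unop c) • y = c • (op s • y)
        rw [op_mul, op_unop, mul_smul] }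
  let h : ModuleCat.of Sᵐᵒᵖ S ⟶ F.obj M := ModuleCat.ofHom hlin
  have hEq : RightAnn S (F.obj M) y = LinearMap.ker (h.hom : ModuleCat.of Sᵐᵒᵖ S →ₗ[Sᵐᵒᵖ] F.obj M) := by
    ext r
    exact Iff.rfl
  have hker : IsEssentialSubmodule (LinearMap.ker (h.hom : ModuleCat.of Sᵐᵒᵖ S →ₗ[Sᵐᵒᵖ] F.obj M)) :=
    hEq ▸ hy
  have hchar := (ess_ker_iff h).mp hker
  have hchar2 : ∀ (C : ModuleCat.{u} Rᵐᵒᵖ) (g : C ⟶ E.functor.obj (ModuleCat.of Sᵐᵒᵖ S)),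
      Mono (g ≫ E.functor.map h) → Limits.IsZero C :=
    fun C g hg => char_transport E h hchar C g hg
  have hker2 := (ess_ker_iff (E.functor.map h)).mpr hchar2
  let θ : E.functor.obj (F.obj M) ≅ M := (F.asEquivalence.unitIso.app M).symm
  let f : E.functor.obj (ModuleCat.of Sᵐᵒᵖ S) ⟶ M := E.functor.map h ≫ θ.hom
  have hkk : LinearMap.ker (f.hom : E.functor.obj (ModuleCat.of Sᵐᵒᵖ S) →ₗ[Rᵐᵒᵖ] M)
      = LinearMap.ker ((E.functor.map h).hom :
          E.functor.obj (ModuleCat.of Sᵐᵒᵖ S) →ₗ[Rᵐᵒᵖ] E.functor.obj (F.obj M)) := by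
    ext a
    simp only [LinearMap.mem_ker]
    constructor
    · intro hfa
      have h3 : θ.inv (θ.hom ((E.functor.map h) a)) = (E.functor.map h) a := by
        change (θ.hom ≫ θ.inv) _ = _
        rw [θ.hom_inv_id]
        rfl
      have h4 : θ.hom ((E.functor.map h) a) = 0 := hfa
      rw [h4, map_zero] at h3
      exact h3.symm
    · intro ha
      show θ.hom ((E.functor.map h) a) = 0
      rw [ha, map_zero]
  have hkerf : IsEssentialSubmodule
      (LinearMap.ker (f.hom : E.functor.obj (ModuleCat.of Sᵐᵒᵖ S) →ₗ[Rᵐᵒᵖ] M)) := by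
    rw [hkk]; exact hker2
  have hf0 : ∀ a : E.functor.obj (ModuleCat.of Sᵐᵒᵖ S), f a = 0 := by
    intro a
    apply hM
    let φ : R →ₗ[Rᵐᵒᵖ] E.functor.obj (ModuleCat.of Sᵐᵒᵖ S) :=
      { toFun := fun r => op r • a
        map_add' := fun r t => by
          show op (r + t) • a = op r • a + op t • a
          rw [MulOpposite.op_add, add_smul]
        map_smul' := fun c r => by
          show op (r * unop c) • a = c • (op r • a)
          rw [op_mul, op_unop, mul_smul] }
    have hEq2 : RightAnn R M (f a)
        = (LinearMap.ker (f.hom : E.functor.obj (ModuleCat.of Sᵐᵒᵖ S) →ₗ[Rᵐᵒᵖ] M)).comap φ := by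
      ext r
      show op r • f a = 0 ↔ f (op r • a) = 0
      rw [map_smul]
    rw [hEq2]
    exact comap_essential φ hkerf
  have hmap0 : ∀ a : E.functor.obj (ModuleCat.of Sᵐᵒᵖ S), (E.functor.map h) a = 0 := by
    intro a
    have : a ∈ LinearMap.ker ((E.functor.map h).hom :
        E.functor.obj (ModuleCat.of Sᵐᵒᵖ S) →ₗ[Rᵐᵒᵖ] E.functor.obj (F.obj M)) := by
      rw [← hkk]
      exact LinearMap.mem_ker.mpr (hf0 a)
    exact LinearMap.mem_ker.mp this
  have hmap0' : E.functor.map h = 0 := by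
    ext a
    rw [hmap0 a]
    rfl
  have h0 : h = 0 := by
    apply E.functor.map_injective
    rw [hmap0', Functor.map_zero]
  have hy1 : y = h (1 : S) := by
    show y = op (1 : S) • y
    rw [op_one, one_smul]
  rw [hy1, h0]
  rfl
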